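/- For the 2ODE y'' = -(x²z² - 2xy²z - 2xyz² + y⁴ + 2y³z + 2xyz + xz² - y²z - xz)/(-x(xz - y² - x)) (Table 3, entry 3; z = y'), the rational function σ(x,y,z) = -2y/x satisfies the determining equation D(σ) = σ² + (∂_zφ)·σ - ∂_yφ on the set where x ≠ 0 and xz - y² - x ≠ 0. -/

import Mathlib

noncomputable def pdx (F : ℝ × ℝ × ℝ → ℝ) (p : ℝ × ℝ × ℝ) : ℝ :=
  deriv (fun t => F (t, p.2.1, p.2.2)) p.1

noncomputable def pdy (F : ℝ × ℝ × ℝ → ℝ) (p : ℝ × ℝ × ℝ) : ℝ :=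
  deriv (fun t => F (p.1, t, p.2.2)) p.2.1

noncomputable def pdz (F : ℝ × ℝ × ℝ → ℝ) (p : ℝ × ℝ × ℝ) : ℝ :=
  deriv (fun t => F (p.1, p.2.1, t)) p.2.2

/-- The Cartan vector field `D = ∂ₓ + z ∂_y + φ ∂_z` of `y'' = φ(x,y,y')`. -/
noncomputable def Dtot (φ F : ℝ × ℝ × ℝ → ℝ) (p : ℝ × ℝ × ℝ) : ℝ :=
  pdx F p + p.2.2 * pdy F p + φ p * pdz F p

/-- Evaluation of a polynomial in three variables at a point of ℝ³. -/
noncomputable def mev (P : MvPolynomial (Fin 3) ℝ) (p : ℝ × ℝ × ℝ) : ℝ :=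
  MvPolynomial.eval ![p.1, p.2.1, p.2.2] P

noncomputable def phi19 (p : ℝ × ℝ × ℝ) : ℝ :=
  (p.1 ^ 2 * p.2.2 ^ 2 - 2 * p.1 * p.2.1 ^ 2 * p.2.2 - 2 * p.1 * p.2.1 * p.2.2 ^ 2
      + p.2.1 ^ 4 + 2 * p.2.1 ^ 3 * p.2.2 + 2 * p.1 * p.2.1 * p.2.2
      + p.1 * p.2.2 ^ 2 - p.2.1 ^ 2 * p.2.2 - p.1 * p.2.2)
    / (-(p.1 * (p.1 * p.2.2 - p.2.1 ^ 2 - p.1)))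

noncomputable def sigma19 (p : ℝ × ℝ × ℝ) : ℝ := -2 * p.2.1 / p.1

lemma hasDerivAt_poly4 (a b c d e t : ℝ) :
    HasDerivAt (fun s : ℝ => a*s^4 + b*s^3 + c*s^2 + d*s + e)
      (4*a*t^3 + 3*b*t^2 + 2*c*t + d) t := by
  have h := (((hasDerivAt_pow 4 t).const_mul a).add
      (((hasDerivAt_pow 3 t).const_mul b).add
        (((hasDerivAt_id t).pow 2).const_mul c |>.add
          (((hasDerivAt_id t).const_mul d).add_const e))))
  refine (h.congr_of_eventuallyEq (Filter.Eventually.of_forall fun s => ?_)).congr_deriv ?_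
  · simp [id]; ring
  · simp [id]; ring

/-- σ = -2y/x satisfies the determining equation of the Table 3, entry 3 2ODE. -/
theorem sigma19_determining :
    ∀ p : ℝ × ℝ × ℝ, p.1 ≠ 0 → p.1 * p.2.2 - p.2.1 ^ 2 - p.1 ≠ 0 →
      Dtot phi19 sigma19 p =
        sigma19 p ^ 2 + pdz phi19 p * sigma19 p - pdy phi19 p := by
  rintro ⟨x, y, z⟩ hx hD
  simp only at hx hD
  have hDen : -(x * (x * z - y ^ 2 - x)) ≠ 0 := neg_ne_zero.2 (mul_ne_zero hx hD)
  -- pdx sigma19 : deriv (fun t => -2*y/t) at x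
  have hσx : pdx sigma19 (x, y, z) = 2 * y / x ^ 2 := by
    have h := ((hasDerivAt_const x (-2 * y)).div (hasDerivAt_id x) hx)
    simp only [pdx, sigma19]
    simp only [id_eq] at h
    refine h.deriv.trans ?_; field_simp; ring
  have hσy : pdy sigma19 (x, y, z) = -2 / x := by
    have h := ((hasDerivAt_id y).const_mul (-2 : ℝ)).div_const x
    simp only [pdy, sigma19]
    simp only [id_eq] at h
    rw [h.deriv]; field_simp
  have hσz : pdz sigma19 (x, y, z) = 0 := by
    simp only [pdz, sigma19]
    exact deriv_const z _
  -- pdy phi19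
  have hφy : pdy phi19 (x, y, z) =
      ((4*1*y^3 + 3*(2*z)*y^2 + 2*(-2*x*z - z)*y + (-2*x*z^2 + 2*x*z))
        * (x*y^2 + (-(x^2*z) + x^2))
        - (1*y^4 + (2*z)*y^3 + (-2*x*z - z)*y^2 + (-2*x*z^2 + 2*x*z)*y
            + (x^2*z^2 + x*z^2 - x*z))
          * (4*0*y^3 + 3*0*y^2 + 2*x*y + 0))
        / (x*y^2 + (-(x^2*z) + x^2))^2 := by
    have hN := hasDerivAt_poly4 1 (2*z) (-2*x*z - z) (-2*x*z^2 + 2*x*z)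
      (x^2*z^2 + x*z^2 - x*z) y
    have hDd := hasDerivAt_poly4 0 0 x 0 (-(x^2*z) + x^2) y
    have hDval : (0:ℝ)*y^4 + 0*y^3 + x*y^2 + 0*y + (-(x^2*z) + x^2) ≠ 0 := by
      intro h; apply hDen; rw [← h]; ring
    have h := hN.div hDd hDval
    simp only [pdy, phi19]
    have hfun : (fun t => (x ^ 2 * z ^ 2 - 2 * x * t ^ 2 * z - 2 * x * t * z ^ 2
        + t ^ 4 + 2 * t ^ 3 * z + 2 * x * t * z + x * z ^ 2 - t ^ 2 * z - x * z)
        / (-(x * (x * z - t ^ 2 - x))))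
        = fun t => ((1:ℝ)*t^4 + (2*z)*t^3 + (-2*x*z - z)*t^2 + (-2*x*z^2 + 2*x*z)*t
            + (x^2*z^2 + x*z^2 - x*z))
          / ((0:ℝ)*t^4 + 0*t^3 + x*t^2 + 0*t + (-(x^2*z) + x^2)) := by
      funext t; ring_nf
    rw [hfun]; refine h.deriv.trans ?_
    ring_nf
  -- pdz phi19
  have hφz : pdz phi19 (x, y, z) =
      ((4*0*z^3 + 3*0*z^2 + 2*(x^2 - 2*x*y + x)*z + (-2*x*y^2 + 2*y^3 + 2*x*y - y^2 - x))
        * ((-(x^2))*z + (x*y^2 + x^2))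
        - ((x^2 - 2*x*y + x)*z^2 + (-2*x*y^2 + 2*y^3 + 2*x*y - y^2 - x)*z + y^4)
          * (-(x^2)))
        / ((-(x^2))*z + (x*y^2 + x^2))^2 := by
    have hN := hasDerivAt_poly4 0 0 (x^2 - 2*x*y + x) (-2*x*y^2 + 2*y^3 + 2*x*y - y^2 - x)
      (y^4) z
    have hDd := hasDerivAt_poly4 0 0 0 (-(x^2)) (x*y^2 + x^2) z
    have hDval : (0:ℝ)*z^4 + 0*z^3 + 0*z^2 + (-(x^2))*z + (x*y^2 + x^2) ≠ 0 := by
      intro h; apply hDen; rw [← h]; ring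
    have h := hN.div hDd hDval
    simp only [pdz, phi19]
    have hfun : (fun t => (x ^ 2 * t ^ 2 - 2 * x * y ^ 2 * t - 2 * x * y * t ^ 2
        + y ^ 4 + 2 * y ^ 3 * t + 2 * x * y * t + x * t ^ 2 - y ^ 2 * t - x * t)
        / (-(x * (x * t - y ^ 2 - x))))
        = fun t => ((0:ℝ)*t^4 + 0*t^3 + (x^2 - 2*x*y + x)*t^2
            + (-2*x*y^2 + 2*y^3 + 2*x*y - y^2 - x)*t + y^4)
          / ((0:ℝ)*t^4 + 0*t^3 + 0*t^2 + (-(x^2))*t + (x*y^2 + x^2)) := by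
      funext t; ring_nf
    rw [hfun]; refine h.deriv.trans ?_
    ring_nf
  have e2 : ((x*y^2 + (-(x^2*z) + x^2))^2 : ℝ) = (x*(x*z-y^2-x))^2 := by ring
  have e3 : (((-(x^2))*z + (x*y^2 + x^2))^2 : ℝ) = (x*(x*z-y^2-x))^2 := by ring
  rw [e2] at hφy
  rw [e3] at hφz
  have hxD : x*(x*z-y^2-x) ≠ 0 := mul_ne_zero hx hD
  simp only [Dtot, hσx, hσy, hσz, hφy, hφz, sigma19, mul_zero, add_zero]
  field_simp
  ring
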